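/- Let α ∈ (0, 1), p ∈ [1, ∞) and T > 0. Let ℓ : ℝ^d → [0, ∞) be bounded and α-Hölder continuous (i.e. ℓ ∈ C^α_b(ℝ^d)) and assume K := ∫_{ℝ^d} (1 + |x|^p) · √(ℓ(x)) dx < ∞. There exists a constant c > 0 (depending only on d, T, α, p, ‖ℓ‖_{C^α_b} and K) such that for all 0 ≤ s < t ≤ T (with the convention P_0 ℓ := ℓ): ∫_{ℝ^d} (1 + |x|^p) · |P_t ℓ(x) − P_s ℓ(x)| dx ≤ c · (t − s)^(α/4). -/

import Mathlib

open Real MeasureTheory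

/-- The Gaussian heat kernel `p_t(x) = (4πt)^(-d/2) exp(-|x|²/(4t))`. -/
noncomputable def heatKernel (d : ℕ) (t : ℝ) (x : EuclideanSpace ℝ (Fin d)) : ℝ :=
  (4 * Real.pi * t) ^ (-(d : ℝ) / 2) * Real.exp (-‖x‖ ^ 2 / (4 * t))

/-- The heat semigroup `P_t f (x) = ∫ p_t(x - y) f(y) dy` for `t > 0`,
with the convention `P_0 f := f`. -/
noncomputable def heatSemigroup (d : ℕ) (t : ℝ) (f : EuclideanSpace ℝ (Fin d) → ℝ)
    (x : EuclideanSpace ℝ (Fin d)) : ℝ :=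
  if t = 0 then f x else ∫ y : EuclideanSpace ℝ (Fin d), heatKernel d t (x - y) * f y

namespace Stmt16Aux

lemma pow_le_fact_mul_exp (x : ℝ) (hx : 0 ≤ x) (n : ℕ) :
    x ^ n ≤ (Nat.factorial n : ℝ) * Real.exp x := by
  have h1 : x ^ n / (Nat.factorial n : ℝ)
      ≤ ∑ i ∈ Finset.range (n+1), x ^ i / (Nat.factorial i : ℝ) :=
    Finset.single_le_sum (f := fun i => x ^ i / (Nat.factorial i : ℝ))
      (fun i _ => by positivity) (Finset.self_mem_range_succ n)
  have h2 := Real.sum_le_exp_of_nonneg hx (n+1)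
  have hn : (0:ℝ) < (Nat.factorial n : ℝ) := by positivity
  calc x ^ n = (x ^ n / (Nat.factorial n : ℝ)) * (Nat.factorial n : ℝ) := by field_simp
  _ ≤ Real.exp x * (Nat.factorial n : ℝ) := mul_le_mul_of_nonneg_right (h1.trans h2) hn.le
  _ = _ := mul_comm _ _

lemma integrable_gauss (d : ℕ) {b : ℝ} (hb : 0 < b) :
    Integrable (fun v : EuclideanSpace ℝ (Fin d) => Real.exp (-b * ‖v‖ ^ 2)) := by
  have h := (GaussianFourier.integrable_cexp_neg_mul_sq_norm_add
      (V := EuclideanSpace ℝ (Fin d)) (b := (b:ℂ)) (by simpa using hb) 0 0).norm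
  have e : (fun v : EuclideanSpace ℝ (Fin d) => Real.exp (-b * ‖v‖ ^ 2))
      = fun v : EuclideanSpace ℝ (Fin d) =>
        ‖Complex.exp (-(b:ℂ) * (‖v‖:ℂ) ^ 2 + 0 * (inner ℝ (0 : EuclideanSpace ℝ (Fin d)) v : ℝ))‖ := by
    funext v
    rw [Complex.norm_exp]
    congr 1
    simp [zero_mul, ← Complex.ofReal_pow, ← Complex.ofReal_mul, ← Complex.ofReal_neg]
  rw [e]; exact h

lemma rpow_le_mul_exp_sq {b q : ℝ} (hb : 0 < b) (hq : 0 ≤ q) :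
    ∃ C : ℝ, 0 < C ∧ ∀ r : ℝ, 0 ≤ r → r ^ q ≤ C * Real.exp (b * r ^ 2) := by
  set n := ⌈q⌉₊ with hn
  set C := max 1 ((Nat.factorial n : ℝ) * b⁻¹ ^ n) with hC
  have hC1 : (1:ℝ) ≤ C := le_max_left _ _
  refine ⟨C, lt_of_lt_of_le one_pos hC1, fun r hr => ?_⟩
  have hexp1 : (1:ℝ) ≤ Real.exp (b * r ^ 2) := Real.one_le_exp (by positivity)
  rcases le_total r 1 with h1 | h1
  · calc r ^ q ≤ 1 := Real.rpow_le_one hr h1 hq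
    _ ≤ C * Real.exp (b * r ^ 2) := by nlinarith
  · have hrq : r ^ q ≤ r ^ (n : ℝ) :=
      Real.rpow_le_rpow_of_exponent_le h1 (Nat.le_ceil q)
    have h2 : r ^ (n:ℝ) = r ^ n := Real.rpow_natCast r n
    have h3 : r ^ n ≤ (r ^ 2) ^ n := by
      rw [← pow_mul]
      exact pow_le_pow_right₀ h1 (by omega)
    have h4 : (b * r ^ 2) ^ n ≤ (Nat.factorial n : ℝ) * Real.exp (b * r ^ 2) :=
      pow_le_fact_mul_exp _ (by positivity) n
    have h5 : (r ^ 2) ^ n = b⁻¹ ^ n * (b * r ^ 2) ^ n := by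
      rw [mul_pow, ← mul_assoc, ← mul_pow, inv_mul_cancel₀ hb.ne', one_pow, one_mul]
    have h6 : b⁻¹ ^ n * (b * r ^ 2) ^ n
        ≤ b⁻¹ ^ n * ((Nat.factorial n : ℝ) * Real.exp (b * r ^ 2)) :=
      mul_le_mul_of_nonneg_left h4 (by positivity)
    have h7 : ((Nat.factorial n : ℝ) * b⁻¹ ^ n) ≤ C := le_max_right _ _
    calc r ^ q ≤ r ^ n := h2 ▸ hrq
    _ ≤ (r^2) ^ n := h3
    _ ≤ b⁻¹ ^ n * ((Nat.factorial n : ℝ) * Real.exp (b * r ^ 2)) := h5 ▸ h6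
    _ = ((Nat.factorial n : ℝ) * b⁻¹ ^ n) * Real.exp (b * r ^ 2) := by ring
    _ ≤ C * Real.exp (b * r ^ 2) := mul_le_mul_of_nonneg_right h7 (Real.exp_nonneg _)

lemma integrable_moment (d : ℕ) {b q : ℝ} (hb : 0 < b) (hq : 0 ≤ q) :
    Integrable (fun v : EuclideanSpace ℝ (Fin d) => ‖v‖ ^ q * Real.exp (-b * ‖v‖ ^ 2)) := by
  obtain ⟨C, hC, hCle⟩ := rpow_le_mul_exp_sq (b := b/2) (by positivity) hq
  have hint := (integrable_gauss d (b := b/2) (by positivity)).const_mul C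
  refine hint.mono' ?_ (Filter.Eventually.of_forall fun v => ?_)
  · exact ((continuous_norm.rpow_const fun v => Or.inr hq).mul
      (Real.continuous_exp.comp (continuous_const.mul (continuous_norm.pow 2)))).aestronglyMeasurable
  · rw [Real.norm_eq_abs, abs_of_nonneg (by positivity)]
    calc ‖v‖ ^ q * Real.exp (-b * ‖v‖ ^ 2)
        ≤ (C * Real.exp (b/2 * ‖v‖ ^ 2)) * Real.exp (-b * ‖v‖ ^ 2) :=
          mul_le_mul_of_nonneg_right (hCle ‖v‖ (norm_nonneg v)) (Real.exp_nonneg _)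
    _ = C * Real.exp (-(b/2) * ‖v‖ ^ 2) := by
        rw [mul_assoc, ← Real.exp_add]
        congr 2
        ring

lemma integral_gauss_euclidean (d : ℕ) {t : ℝ} (ht : 0 < t) :
    ∫ v : EuclideanSpace ℝ (Fin d), Real.exp (-‖v‖ ^ 2 / (4 * t)) = (4 * π * t) ^ ((d:ℝ) / 2) := by
  have h := GaussianFourier.integral_rexp_neg_mul_sq_norm (V := EuclideanSpace ℝ (Fin d))
    (b := (4*t)⁻¹) (by positivity)
  simp_rw [show ∀ v : EuclideanSpace ℝ (Fin d), -‖v‖ ^ 2 / (4*t) = -(4*t)⁻¹ * ‖v‖ ^ 2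
    from fun v => by ring]
  rw [h, finrank_euclideanSpace_fin]
  congr 1
  field_simp

lemma sqrt_pow_mul_rpow {s : ℝ} (hs : 0 < s) (d : ℕ) (a : ℝ) (ha : 0 < a) :
    (Real.sqrt s) ^ d * (a * s) ^ (-(d:ℝ) / 2) = a ^ (-(d:ℝ) / 2) := by
  have h1 : (Real.sqrt s) ^ d = s ^ ((d:ℝ) / 2) := by
    rw [← Real.rpow_natCast (Real.sqrt s) d, Real.sqrt_eq_rpow, ← Real.rpow_mul hs.le]
    congr 1
    ring
  have h2 : (a * s) ^ (-(d:ℝ) / 2) = a ^ (-(d:ℝ) / 2) * s ^ (-(d:ℝ) / 2) :=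
    Real.mul_rpow ha.le hs.le
  rw [h1, h2, ← mul_assoc, mul_comm (s ^ ((d:ℝ)/2)), mul_assoc, ← Real.rpow_add hs]
  simp [neg_div]

lemma heatSemigroup_rep (d : ℕ) (ℓ : EuclideanSpace ℝ (Fin d) → ℝ) {s : ℝ} (hs : 0 ≤ s)
    (x : EuclideanSpace ℝ (Fin d)) :
    heatSemigroup d s ℓ x
      = ∫ v : EuclideanSpace ℝ (Fin d),
          ((4 * π) ^ (-(d:ℝ) / 2) * Real.exp (-‖v‖ ^ 2 / 4)) * ℓ (x - Real.sqrt s • v) := by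
  have h4π : (0:ℝ) < 4 * π := by positivity
  rcases eq_or_lt_of_le hs with h0 | hs'
  · rw [heatSemigroup, if_pos h0.symm, ← h0]
    simp only [Real.sqrt_zero, zero_smul, sub_zero]
    rw [integral_mul_const, integral_const_mul]
    rw [show (fun v : EuclideanSpace ℝ (Fin d) => Real.exp (-‖v‖ ^ 2 / 4))
        = fun v : EuclideanSpace ℝ (Fin d) => Real.exp (-‖v‖ ^ 2 / (4 * 1)) by norm_num]
    rw [integral_gauss_euclidean d one_pos, mul_one, ← Real.rpow_add h4π]
    simp [neg_div]
  · rw [heatSemigroup, if_neg hs'.ne']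
    have step1 : (∫ y, heatKernel d s (x - y) * ℓ y)
        = ∫ v, heatKernel d s v * ℓ (x - v) := by
      have h := integral_sub_left_eq_self
        (fun v : EuclideanSpace ℝ (Fin d) => heatKernel d s v * ℓ (x - v)) volume x
      simp only [sub_sub_cancel] at h
      exact h
    rw [step1]
    have hcs := Measure.integral_comp_smul_of_nonneg (μ := volume)
      (fun v : EuclideanSpace ℝ (Fin d) => heatKernel d s v * ℓ (x - v)) (Real.sqrt s)
      (hR := Real.sqrt_nonneg s)
    rw [finrank_euclideanSpace_fin] at hcs
    have hsd : (0:ℝ) < (Real.sqrt s) ^ d := by positivity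
    have step2 : (∫ v, heatKernel d s v * ℓ (x - v))
        = ((Real.sqrt s) ^ d) • ∫ w, heatKernel d s (Real.sqrt s • w) * ℓ (x - Real.sqrt s • w) := by
      rw [hcs, smul_smul, mul_inv_cancel₀ hsd.ne', one_smul]
    rw [step2, ← integral_smul]
    congr 1
    funext w
    have hnrm : ‖Real.sqrt s • w‖ ^ 2 = s * ‖w‖ ^ 2 := by
      rw [norm_smul, Real.norm_eq_abs, abs_of_nonneg (Real.sqrt_nonneg s), mul_pow,
        Real.sq_sqrt hs]
    rw [smul_eq_mul, heatKernel, hnrm,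
      show -(s * ‖w‖ ^ 2) / (4 * s) = -‖w‖ ^ 2 / 4 by field_simp,
      ← mul_assoc, ← mul_assoc, sqrt_pow_mul_rpow hs' d (4 * π) h4π]

lemma sqrt_add_le {a b : ℝ} (ha : 0 ≤ a) (hb : 0 ≤ b) :
    Real.sqrt (a + b) ≤ Real.sqrt a + Real.sqrt b := by
  have h1 := Real.sq_sqrt ha
  have h2 := Real.sq_sqrt hb
  have h3 := Real.sqrt_nonneg a
  have h4 := Real.sqrt_nonneg b
  calc Real.sqrt (a + b) ≤ Real.sqrt ((Real.sqrt a + Real.sqrt b) ^ 2) :=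
        Real.sqrt_le_sqrt (by nlinarith)
  _ = Real.sqrt a + Real.sqrt b := Real.sqrt_sq (by positivity)

end Stmt16Aux
set_option maxHeartbeats 2000000 in
open Stmt16Aux in
theorem stmt_16 (d : ℕ) (α p T : ℝ) (hα0 : 0 < α) (hα1 : α < 1) (hp : 1 ≤ p) (hT : 0 < T)
    (ℓ : EuclideanSpace ℝ (Fin d) → ℝ) (hℓmeas : Measurable ℓ) (hℓnn : ∀ x, 0 ≤ ℓ x)
    (hℓbdd : ∃ B : ℝ, ∀ x, ℓ x ≤ B)
    (L : ℝ) (hL : 0 ≤ L) (hℓholder : ∀ x y, |ℓ x - ℓ y| ≤ L * ‖x - y‖ ^ α)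
    (hK : Integrable (fun x : EuclideanSpace ℝ (Fin d) => (1 + ‖x‖ ^ p) * Real.sqrt (ℓ x))) :
    ∃ c : ℝ, 0 < c ∧ ∀ s t : ℝ, 0 ≤ s → s < t → t ≤ T →
      ∫ x : EuclideanSpace ℝ (Fin d),
          (1 + ‖x‖ ^ p) * |heatSemigroup d t ℓ x - heatSemigroup d s ℓ x| ≤
        c * (t - s) ^ (α / 4) := by
  obtain ⟨B, hB⟩ := hℓbdd
  have hB0 : 0 ≤ B := le_trans (hℓnn 0) (hB 0)
  have hp0 : (0:ℝ) ≤ p := by linarith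
  have hα2 : (0:ℝ) ≤ α / 2 := by linarith
  -- the normalized Gaussian density
  set cφ : ℝ := (4 * π) ^ (-(d:ℝ) / 2) with hcφ
  have hcφ0 : 0 < cφ := Real.rpow_pos_of_pos (by positivity) _
  set φ : EuclideanSpace ℝ (Fin d) → ℝ := fun v => cφ * Real.exp (-‖v‖ ^ 2 / 4) with hφdef
  have hφ0 : ∀ v, 0 ≤ φ v := fun v => by positivity
  have hφcont : Continuous φ :=
    continuous_const.mul (Real.continuous_exp.comp ((continuous_norm.pow 2).neg.div_const 4))
  -- moments of φ
  have hmom : ∀ q : ℝ, 0 ≤ q →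
      Integrable (fun v : EuclideanSpace ℝ (Fin d) => ‖v‖ ^ q * φ v) := by
    intro q hq
    have h := (integrable_moment d (b := (4:ℝ)⁻¹) (by norm_num) hq).const_mul cφ
    have e : (fun v : EuclideanSpace ℝ (Fin d) => cφ * (‖v‖ ^ q * Real.exp (-(4:ℝ)⁻¹ * ‖v‖ ^ 2)))
        = fun v => ‖v‖ ^ q * φ v := by
      funext v
      rw [show -(4:ℝ)⁻¹ * ‖v‖ ^ 2 = -‖v‖ ^ 2 / 4 by ring, hφdef]
      ring
    rwa [e] at h
  have hφint : Integrable φ := by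
    have := hmom 0 le_rfl
    simpa using this
  -- h := sqrt ∘ ℓ
  set h : EuclideanSpace ℝ (Fin d) → ℝ := fun x => Real.sqrt (ℓ x) with hhdef
  have hh : Measurable h := Real.continuous_sqrt.measurable.comp hℓmeas
  have hh0 : ∀ x, 0 ≤ h x := fun x => Real.sqrt_nonneg _
  have hhB : ∀ x, h x ≤ Real.sqrt B := fun x => Real.sqrt_le_sqrt (hB x)
  -- the weight
  have hw0 : ∀ x : EuclideanSpace ℝ (Fin d), 0 ≤ 1 + ‖x‖ ^ p := fun x => by positivity
  have hwcont : Continuous (fun x : EuclideanSpace ℝ (Fin d) => 1 + ‖x‖ ^ p) :=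
    continuous_const.add (continuous_norm.rpow_const fun x => Or.inr hp0)
  have hrpcont : Continuous (fun v : EuclideanSpace ℝ (Fin d) => ‖v‖ ^ (α/2)) :=
    continuous_norm.rpow_const fun x => Or.inr hα2
  -- constants
  set K₀ : ℝ := ∫ x : EuclideanSpace ℝ (Fin d), (1 + ‖x‖ ^ p) * Real.sqrt (ℓ x) with hK₀def
  have hK₀0 : 0 ≤ K₀ :=
    integral_nonneg fun x => mul_nonneg (hw0 x) (Real.sqrt_nonneg _)
  set m : EuclideanSpace ℝ (Fin d) → ℝ :=
    fun v => φ v * (‖v‖ ^ (α/2) * (1 + T ^ (p/2) * ‖v‖ ^ p)) with hmdef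
  have hm0 : ∀ v, 0 ≤ m v := fun v => by
    have := hφ0 v
    have h1 : (0:ℝ) ≤ ‖v‖ ^ (α/2) := Real.rpow_nonneg (norm_nonneg _) _
    have h2 : (0:ℝ) ≤ T ^ (p/2) * ‖v‖ ^ p :=
      mul_nonneg (Real.rpow_nonneg hT.le _) (Real.rpow_nonneg (norm_nonneg _) _)
    have h3 : (0:ℝ) ≤ 1 + T ^ (p/2) * ‖v‖ ^ p := by linarith
    positivity
  have hmint : Integrable m := by
    have e : m = fun v => ‖v‖ ^ (α/2) * φ v + T ^ (p/2) * (‖v‖ ^ (α/2 + p) * φ v) := by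
      funext v
      rw [hmdef, Real.rpow_add_of_nonneg (norm_nonneg v) hα2 hp0]
      ring
    rw [e]
    exact (hmom _ hα2).add (((hmom _ (by linarith)).const_mul _))
  set M : ℝ := ∫ v : EuclideanSpace ℝ (Fin d), m v with hMdef
  have hM0 : 0 ≤ M := integral_nonneg hm0
  refine ⟨Real.sqrt L * ((2:ℝ) ^ (p+1) * K₀ * M) + 1, ?_, fun s t hs0 hst htT => ?_⟩
  · have h1 : (0:ℝ) ≤ Real.sqrt L * ((2:ℝ) ^ (p+1) * K₀ * M) :=
      mul_nonneg (Real.sqrt_nonneg _)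
        (mul_nonneg (mul_nonneg (Real.rpow_nonneg (by norm_num) _) hK₀0) hM0)
    linarith
  have ht0 : 0 < t := lt_of_le_of_lt hs0 hst
  have hts0 : (0:ℝ) ≤ t - s := by linarith
  set σ : ℝ := Real.sqrt s with hσdef
  set τ : ℝ := Real.sqrt t with hτdef
  have hσ0 : 0 ≤ σ := Real.sqrt_nonneg _
  have hτ0 : 0 ≤ τ := Real.sqrt_nonneg _
  have hστ : σ ≤ τ := Real.sqrt_le_sqrt hst.le
  have hτT : τ ≤ Real.sqrt T := Real.sqrt_le_sqrt htT
  have hτσ0 : 0 ≤ τ - σ := by linarith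
  have hts2 : (τ - σ) ^ 2 ≤ t - s := by
    have hσ2 : σ ^ 2 = s := Real.sq_sqrt hs0
    have hτ2 : τ ^ 2 = t := Real.sq_sqrt ht0.le
    have hmul : σ * σ ≤ σ * τ := mul_le_mul_of_nonneg_left hστ hσ0
    nlinarith
  -- the key exponent inequality
  have hexp : (τ - σ) ^ (α/2) ≤ (t - s) ^ (α/4) := by
    have e1 : (τ - σ) ^ (α/2) = ((τ - σ) ^ (2:ℕ)) ^ (α/4) := by
      rw [← Real.rpow_natCast (τ - σ) 2, ← Real.rpow_mul hτσ0]
      congr 1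
      push_cast
      ring
    rw [e1]
    exact Real.rpow_le_rpow (by positivity) hts2 (by linarith)
  -- pointwise Hölder-interpolation bound
  have hPW : ∀ a b : EuclideanSpace ℝ (Fin d),
      |ℓ a - ℓ b| ≤ Real.sqrt L * (‖a - b‖ ^ (α/2) * (h a + h b)) := by
    intro a b
    have h1 : |ℓ a - ℓ b| ≤ ℓ a + ℓ b := by
      refine (abs_sub _ _).trans ?_
      rw [abs_of_nonneg (hℓnn a), abs_of_nonneg (hℓnn b)]
    have h2 := hℓholder a b
    have habs := abs_nonneg (ℓ a - ℓ b)
    have hsq : |ℓ a - ℓ b| ^ 2 ≤ (L * ‖a - b‖ ^ α) * (ℓ a + ℓ b) := by nlinarith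
    have hsqa : Real.sqrt (‖a - b‖ ^ α) = ‖a - b‖ ^ (α/2) := by
      rw [Real.sqrt_eq_rpow, ← Real.rpow_mul (norm_nonneg _)]
      congr 1
      ring
    calc |ℓ a - ℓ b| = Real.sqrt (|ℓ a - ℓ b| ^ 2) := (Real.sqrt_sq habs).symm
    _ ≤ Real.sqrt ((L * ‖a - b‖ ^ α) * (ℓ a + ℓ b)) := Real.sqrt_le_sqrt hsq
    _ = Real.sqrt (L * ‖a - b‖ ^ α) * Real.sqrt (ℓ a + ℓ b) := Real.sqrt_mul (by positivity) _
    _ = (Real.sqrt L * ‖a - b‖ ^ (α/2)) * Real.sqrt (ℓ a + ℓ b) := by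
        rw [Real.sqrt_mul hL, hsqa]
    _ ≤ (Real.sqrt L * ‖a - b‖ ^ (α/2)) * (h a + h b) := by
        refine mul_le_mul_of_nonneg_left ?_ (by positivity)
        exact sqrt_add_le (hℓnn a) (hℓnn b)
    _ = Real.sqrt L * (‖a - b‖ ^ (α/2) * (h a + h b)) := by ring
  -- pointwise bound on the integrand difference
  have hPW2 : ∀ (x v : EuclideanSpace ℝ (Fin d)),
      |ℓ (x - τ • v) - ℓ (x - σ • v)|
        ≤ (Real.sqrt L * (t - s) ^ (α/4)) * (‖v‖ ^ (α/2) * (h (x - τ • v) + h (x - σ • v))) := by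
    intro x v
    have hab : ‖(x - τ • v) - (x - σ • v)‖ = (τ - σ) * ‖v‖ := by
      have e : (x - τ • v) - (x - σ • v) = (σ - τ) • v := by
        rw [sub_smul]
        abel
      rw [e, norm_smul, Real.norm_eq_abs, abs_sub_comm, abs_of_nonneg hτσ0]
    have hrp : ‖(x - τ • v) - (x - σ • v)‖ ^ (α/2) ≤ (t - s) ^ (α/4) * ‖v‖ ^ (α/2) := by
      rw [hab, Real.mul_rpow hτσ0 (norm_nonneg v)]
      exact mul_le_mul_of_nonneg_right hexp (Real.rpow_nonneg (norm_nonneg _) _)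
    calc |ℓ (x - τ • v) - ℓ (x - σ • v)|
        ≤ Real.sqrt L * (‖(x - τ • v) - (x - σ • v)‖ ^ (α/2)
            * (h (x - τ • v) + h (x - σ • v))) := hPW _ _
    _ ≤ Real.sqrt L * (((t - s) ^ (α/4) * ‖v‖ ^ (α/2)) * (h (x - τ • v) + h (x - σ • v))) := by
        refine mul_le_mul_of_nonneg_left ?_ (Real.sqrt_nonneg _)
        refine mul_le_mul_of_nonneg_right hrp ?_
        have := hh0 (x - τ • v); have := hh0 (x - σ • v); linarith
    _ = (Real.sqrt L * (t - s) ^ (α/4)) * (‖v‖ ^ (α/2) * (h (x - τ • v) + h (x - σ • v))) := by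
        ring
  -- integrability of the basic slices
  have hslice : ∀ (x : EuclideanSpace ℝ (Fin d)) (u : ℝ),
      Integrable (fun v => φ v * ℓ (x - u • v)) := by
    intro x u
    refine (hφint.const_mul B).mono' ?_ (Filter.Eventually.of_forall fun v => ?_)
    · exact (hφcont.measurable.mul
        (hℓmeas.comp (measurable_const.sub (measurable_id.const_smul u)))).aestronglyMeasurable
    · rw [Real.norm_eq_abs, abs_of_nonneg (mul_nonneg (hφ0 v) (hℓnn _))]
      calc φ v * ℓ (x - u • v) ≤ φ v * B := mul_le_mul_of_nonneg_left (hB _) (hφ0 v)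
      _ = B * φ v := mul_comm _ _
  -- integrability of the dominating slices
  have hΨslice : ∀ x : EuclideanSpace ℝ (Fin d),
      Integrable (fun v => φ v * (‖v‖ ^ (α/2) * (h (x - τ • v) + h (x - σ • v)))) := by
    intro x
    refine ((hmom (α/2) hα2).const_mul (2 * Real.sqrt B)).mono'
      ?_ (Filter.Eventually.of_forall fun v => ?_)
    · exact (hφcont.measurable.mul (hrpcont.measurable.mul
        ((hh.comp (measurable_const.sub (measurable_id.const_smul τ))).add
         (hh.comp (measurable_const.sub (measurable_id.const_smul σ)))))).aestronglyMeasurable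
    · have hnn : 0 ≤ φ v * (‖v‖ ^ (α/2) * (h (x - τ • v) + h (x - σ • v))) := by
        have := hh0 (x - τ • v); have := hh0 (x - σ • v)
        have h1 : (0:ℝ) ≤ ‖v‖ ^ (α/2) := Real.rpow_nonneg (norm_nonneg _) _
        positivity
      rw [Real.norm_eq_abs, abs_of_nonneg hnn]
      have h1 : (0:ℝ) ≤ ‖v‖ ^ (α/2) := Real.rpow_nonneg (norm_nonneg _) _
      have h2 : h (x - τ • v) + h (x - σ • v) ≤ 2 * Real.sqrt B := by
        have := hhB (x - τ • v); have := hhB (x - σ • v); linarith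
      calc φ v * (‖v‖ ^ (α/2) * (h (x - τ • v) + h (x - σ • v)))
          ≤ φ v * (‖v‖ ^ (α/2) * (2 * Real.sqrt B)) := by
            refine mul_le_mul_of_nonneg_left ?_ (hφ0 v)
            exact mul_le_mul_of_nonneg_left h2 h1
      _ = 2 * Real.sqrt B * (‖v‖ ^ (α/2) * φ v) := by ring
  -- the difference formula
  have hDiff : ∀ x : EuclideanSpace ℝ (Fin d),
      heatSemigroup d t ℓ x - heatSemigroup d s ℓ x
        = ∫ v, φ v * (ℓ (x - τ • v) - ℓ (x - σ • v)) := by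
    intro x
    rw [heatSemigroup_rep d ℓ ht0.le x, heatSemigroup_rep d ℓ hs0 x, ← integral_sub
      (hslice x τ) (hslice x σ)]
    congr 1
    funext v
    rw [hφdef]
    ring
  -- the dominating function
  set Ψ : EuclideanSpace ℝ (Fin d) → ℝ :=
    fun x => ∫ v, φ v * (‖v‖ ^ (α/2) * (h (x - τ • v) + h (x - σ • v))) with hΨdef
  have hΨ0 : ∀ x, 0 ≤ Ψ x := by
    intro x
    refine integral_nonneg fun v => ?_
    have := hh0 (x - τ • v); have := hh0 (x - σ • v)
    have h1 : (0:ℝ) ≤ ‖v‖ ^ (α/2) := Real.rpow_nonneg (norm_nonneg _) _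
    positivity
  have hFmeas : Measurable (fun q : (EuclideanSpace ℝ (Fin d)) × (EuclideanSpace ℝ (Fin d)) =>
      φ q.2 * (‖q.2‖ ^ (α/2) * (h (q.1 - τ • q.2) + h (q.1 - σ • q.2)))) := by
    refine ((hφcont.measurable.comp measurable_snd).mul
      ((hrpcont.measurable.comp measurable_snd).mul
        ((hh.comp (measurable_fst.sub (measurable_snd.const_smul τ))).add
         (hh.comp (measurable_fst.sub (measurable_snd.const_smul σ))))))
  have hΨmeas : StronglyMeasurable Ψ := by
    exact hFmeas.stronglyMeasurable.integral_prod_right'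
  -- the pointwise domination
  have hDb : ∀ x : EuclideanSpace ℝ (Fin d),
      |heatSemigroup d t ℓ x - heatSemigroup d s ℓ x|
        ≤ (Real.sqrt L * (t - s) ^ (α/4)) * Ψ x := by
    intro x
    rw [hDiff x, ← Real.norm_eq_abs]
    calc ‖∫ v, φ v * (ℓ (x - τ • v) - ℓ (x - σ • v))‖
        ≤ ∫ v, (Real.sqrt L * (t - s) ^ (α/4))
            * (φ v * (‖v‖ ^ (α/2) * (h (x - τ • v) + h (x - σ • v)))) := by
          refine norm_integral_le_of_norm_le ((hΨslice x).const_mul _)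
            (Filter.Eventually.of_forall fun v => ?_)
          rw [Real.norm_eq_abs, abs_mul, abs_of_nonneg (hφ0 v)]
          calc φ v * |ℓ (x - τ • v) - ℓ (x - σ • v)|
              ≤ φ v * ((Real.sqrt L * (t - s) ^ (α/4))
                  * (‖v‖ ^ (α/2) * (h (x - τ • v) + h (x - σ • v)))) :=
                mul_le_mul_of_nonneg_left (hPW2 x v) (hφ0 v)
          _ = (Real.sqrt L * (t - s) ^ (α/4))
                * (φ v * (‖v‖ ^ (α/2) * (h (x - τ • v) + h (x - σ • v)))) := by ring
    _ = (Real.sqrt L * (t - s) ^ (α/4)) * Ψ x := integral_const_mul _ _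
  -- translation estimate in the weighted L¹ norm
  have hTrans : ∀ u : EuclideanSpace ℝ (Fin d),
      (∫⁻ x, ENNReal.ofReal ((1 + ‖x‖ ^ p) * h (x - u)))
        ≤ ENNReal.ofReal ((2:ℝ) ^ p * (1 + ‖u‖ ^ p) * K₀) := by
    intro u
    have h2p0 : (0:ℝ) ≤ (2:ℝ) ^ p := Real.rpow_nonneg (by norm_num) _
    have h2p1 : (1:ℝ) ≤ (2:ℝ) ^ p := Real.one_le_rpow (by norm_num) hp0
    have hwpt : ∀ x : EuclideanSpace ℝ (Fin d),
        (1 + ‖x‖ ^ p) * h (x - u)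
          ≤ ((2:ℝ) ^ p * (1 + ‖u‖ ^ p)) * ((1 + ‖x - u‖ ^ p) * h (x - u)) := by
      intro x
      have hxa : ‖x‖ ≤ ‖x - u‖ + ‖u‖ := by
        calc ‖x‖ = ‖(x - u) + u‖ := by rw [sub_add_cancel]
        _ ≤ ‖x - u‖ + ‖u‖ := norm_add_le _ _
      set a := ‖x - u‖
      set b := ‖u‖
      have ha0 : 0 ≤ a := norm_nonneg _
      have hb0 : 0 ≤ b := norm_nonneg _
      have hap : (0:ℝ) ≤ a ^ p := Real.rpow_nonneg ha0 _
      have hbp : (0:ℝ) ≤ b ^ p := Real.rpow_nonneg hb0 _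
      have h1 : ‖x‖ ^ p ≤ (a + b) ^ p := Real.rpow_le_rpow (norm_nonneg x) hxa hp0
      have h2 : (a + b) ^ p ≤ (2:ℝ) ^ p * (a ^ p + b ^ p) := by
        have hab : a + b ≤ 2 * max a b := by
          have := le_max_left a b; have := le_max_right a b; linarith
        have hmax0 : 0 ≤ max a b := le_trans ha0 (le_max_left a b)
        calc (a + b) ^ p ≤ (2 * max a b) ^ p :=
              Real.rpow_le_rpow (by linarith) hab hp0
        _ = (2:ℝ) ^ p * (max a b) ^ p := Real.mul_rpow (by norm_num) hmax0
        _ ≤ (2:ℝ) ^ p * (a ^ p + b ^ p) := by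
            refine mul_le_mul_of_nonneg_left ?_ h2p0
            rcases le_total a b with hab' | hab'
            · rw [max_eq_right hab']; linarith
            · rw [max_eq_left hab']; linarith
      have hw : 1 + ‖x‖ ^ p ≤ (2:ℝ) ^ p * (1 + b ^ p) * (1 + a ^ p) := by nlinarith [mul_nonneg (mul_nonneg h2p0 hap) hbp]
      calc (1 + ‖x‖ ^ p) * h (x - u)
          ≤ ((2:ℝ) ^ p * (1 + b ^ p) * (1 + a ^ p)) * h (x - u) :=
            mul_le_mul_of_nonneg_right hw (hh0 _)
      _ = ((2:ℝ) ^ p * (1 + b ^ p)) * ((1 + a ^ p) * h (x - u)) := by ring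
    have hc0 : (0:ℝ) ≤ (2:ℝ) ^ p * (1 + ‖u‖ ^ p) := by
      have : (0:ℝ) ≤ ‖u‖ ^ p := Real.rpow_nonneg (norm_nonneg _) _
      positivity
    calc (∫⁻ x, ENNReal.ofReal ((1 + ‖x‖ ^ p) * h (x - u)))
        ≤ ∫⁻ x, ENNReal.ofReal (((2:ℝ) ^ p * (1 + ‖u‖ ^ p)) * ((1 + ‖x - u‖ ^ p) * h (x - u))) :=
          lintegral_mono fun x => ENNReal.ofReal_le_ofReal (hwpt x)
    _ = ENNReal.ofReal ((2:ℝ) ^ p * (1 + ‖u‖ ^ p))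
          * ∫⁻ x, ENNReal.ofReal ((1 + ‖x - u‖ ^ p) * h (x - u)) := by
        simp_rw [ENNReal.ofReal_mul hc0]
        rw [lintegral_const_mul' _ _ ENNReal.ofReal_ne_top]
    _ = ENNReal.ofReal ((2:ℝ) ^ p * (1 + ‖u‖ ^ p))
          * ∫⁻ x, ENNReal.ofReal ((1 + ‖x‖ ^ p) * h x) := by
        congr 1
        exact lintegral_sub_right_eq_self
          (fun x => ENNReal.ofReal ((1 + ‖x‖ ^ p) * h x)) u
    _ = ENNReal.ofReal ((2:ℝ) ^ p * (1 + ‖u‖ ^ p)) * ENNReal.ofReal K₀ := by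
        congr 1
        rw [hK₀def]
        exact (ofReal_integral_eq_lintegral_ofReal hK
          (Filter.Eventually.of_forall fun x => mul_nonneg (hw0 x) (Real.sqrt_nonneg _))).symm
    _ = ENNReal.ofReal ((2:ℝ) ^ p * (1 + ‖u‖ ^ p) * K₀) := by
        rw [← ENNReal.ofReal_mul hc0]
  -- comparison of translated weights
  have hsqT : (Real.sqrt T) ^ p = T ^ (p/2) := by
    rw [Real.sqrt_eq_rpow, ← Real.rpow_mul hT.le]
    congr 1
    ring
  have h2p0' : (0:ℝ) ≤ (2:ℝ) ^ p := Real.rpow_nonneg (by norm_num) _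
  have hmul_bound : ∀ (r : ℝ), 0 ≤ r → r ≤ Real.sqrt T → ∀ v : EuclideanSpace ℝ (Fin d),
      (2:ℝ) ^ p * (1 + ‖r • v‖ ^ p) * K₀ ≤ (2:ℝ) ^ p * (1 + T ^ (p/2) * ‖v‖ ^ p) * K₀ := by
    intro r hr hrT v
    have h1 : ‖r • v‖ ^ p ≤ T ^ (p/2) * ‖v‖ ^ p := by
      rw [norm_smul, Real.norm_eq_abs, abs_of_nonneg hr, Real.mul_rpow hr (norm_nonneg v)]
      refine mul_le_mul_of_nonneg_right ?_ (Real.rpow_nonneg (norm_nonneg v) _)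
      rw [← hsqT]
      exact Real.rpow_le_rpow hr hrT hp0
    have h2 : (2:ℝ)^p * (1 + ‖r • v‖^p) ≤ (2:ℝ)^p * (1 + T^(p/2) * ‖v‖^p) :=
      mul_le_mul_of_nonneg_left (by linarith) h2p0'
    exact mul_le_mul_of_nonneg_right h2 hK₀0
  have h2pp1 : (2:ℝ) ^ (p+1) = (2:ℝ) ^ p * 2 := Real.rpow_add_one (by norm_num) p
  -- the inner lintegral bound
  have hInner : ∀ v : EuclideanSpace ℝ (Fin d),
      (∫⁻ x, ENNReal.ofReal ((1 + ‖x‖ ^ p)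
          * (φ v * (‖v‖ ^ (α/2) * (h (x - τ • v) + h (x - σ • v))))))
        ≤ ENNReal.ofReal ((2:ℝ) ^ (p+1) * K₀ * m v) := by
    intro v
    have hcv0 : 0 ≤ φ v * ‖v‖ ^ (α/2) :=
      mul_nonneg (hφ0 v) (Real.rpow_nonneg (norm_nonneg _) _)
    have hY0 : 0 ≤ (2:ℝ) ^ p * (1 + T ^ (p/2) * ‖v‖ ^ p) * K₀ := by
      have h1 : (0:ℝ) ≤ T ^ (p/2) * ‖v‖ ^ p :=
        mul_nonneg (Real.rpow_nonneg hT.le _) (Real.rpow_nonneg (norm_nonneg _) _)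
      have h2 : (0:ℝ) ≤ 1 + T ^ (p/2) * ‖v‖ ^ p := by linarith
      positivity
    have hmeas1 : Measurable (fun x : EuclideanSpace ℝ (Fin d) =>
        ENNReal.ofReal ((1 + ‖x‖ ^ p) * h (x - τ • v))) :=
      (hwcont.measurable.mul (hh.comp (measurable_id.sub measurable_const))).ennreal_ofReal
    calc (∫⁻ x, ENNReal.ofReal ((1 + ‖x‖ ^ p)
            * (φ v * (‖v‖ ^ (α/2) * (h (x - τ • v) + h (x - σ • v))))))
        = ∫⁻ x, ENNReal.ofReal (φ v * ‖v‖ ^ (α/2))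
            * (ENNReal.ofReal ((1 + ‖x‖ ^ p) * h (x - τ • v))
              + ENNReal.ofReal ((1 + ‖x‖ ^ p) * h (x - σ • v))) := by
          refine lintegral_congr fun x => ?_
          rw [show (1 + ‖x‖ ^ p) * (φ v * (‖v‖ ^ (α/2) * (h (x - τ • v) + h (x - σ • v))))
              = (φ v * ‖v‖ ^ (α/2)) * ((1 + ‖x‖ ^ p) * h (x - τ • v)
                + (1 + ‖x‖ ^ p) * h (x - σ • v)) from by ring,
            ENNReal.ofReal_mul hcv0,
            ENNReal.ofReal_add (mul_nonneg (hw0 x) (hh0 _)) (mul_nonneg (hw0 x) (hh0 _))]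
    _ = ENNReal.ofReal (φ v * ‖v‖ ^ (α/2))
          * ((∫⁻ x, ENNReal.ofReal ((1 + ‖x‖ ^ p) * h (x - τ • v)))
            + ∫⁻ x, ENNReal.ofReal ((1 + ‖x‖ ^ p) * h (x - σ • v))) := by
        rw [lintegral_const_mul' _ _ ENNReal.ofReal_ne_top, lintegral_add_left hmeas1]
    _ ≤ ENNReal.ofReal (φ v * ‖v‖ ^ (α/2))
          * (ENNReal.ofReal ((2:ℝ) ^ p * (1 + T ^ (p/2) * ‖v‖ ^ p) * K₀)
            + ENNReal.ofReal ((2:ℝ) ^ p * (1 + T ^ (p/2) * ‖v‖ ^ p) * K₀)) := by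
        refine mul_le_mul_right (add_le_add ?_ ?_) _
        · exact (hTrans (τ • v)).trans (ENNReal.ofReal_le_ofReal (hmul_bound τ hτ0 hτT v))
        · exact (hTrans (σ • v)).trans
            (ENNReal.ofReal_le_ofReal (hmul_bound σ hσ0 (hστ.trans hτT) v))
    _ = ENNReal.ofReal ((φ v * ‖v‖ ^ (α/2))
          * ((2:ℝ) ^ p * (1 + T ^ (p/2) * ‖v‖ ^ p) * K₀
            + (2:ℝ) ^ p * (1 + T ^ (p/2) * ‖v‖ ^ p) * K₀)) := by
        rw [← ENNReal.ofReal_add hY0 hY0, ← ENNReal.ofReal_mul hcv0]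
    _ = ENNReal.ofReal ((2:ℝ) ^ (p+1) * K₀ * m v) := by
        congr 1
        simp only [hmdef]
        rw [h2pp1]
        ring
  -- measurability and nonnegativity of the weighted dominating function
  have hwΨnn : 0 ≤ᵐ[(volume : Measure (EuclideanSpace ℝ (Fin d)))]
      (fun x => (1 + ‖x‖ ^ p) * Ψ x) :=
    Filter.Eventually.of_forall fun x => mul_nonneg (hw0 x) (hΨ0 x)
  have hwΨmeas : AEStronglyMeasurable (fun x => (1 + ‖x‖ ^ p) * Ψ x)
      (volume : Measure (EuclideanSpace ℝ (Fin d))) :=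
    hwcont.aestronglyMeasurable.mul hΨmeas.aestronglyMeasurable
  -- the main lintegral estimate
  have hMain : (∫⁻ x, ENNReal.ofReal ((1 + ‖x‖ ^ p) * Ψ x))
      ≤ ENNReal.ofReal ((2:ℝ) ^ (p+1) * K₀ * M) := by
    have e1 : ∀ x : EuclideanSpace ℝ (Fin d), ENNReal.ofReal ((1 + ‖x‖ ^ p) * Ψ x)
        = ∫⁻ v, ENNReal.ofReal ((1 + ‖x‖ ^ p)
            * (φ v * (‖v‖ ^ (α/2) * (h (x - τ • v) + h (x - σ • v))))) := by
      intro x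
      have hi := (hΨslice x).const_mul (1 + ‖x‖ ^ p)
      have hnn : 0 ≤ᵐ[(volume : Measure (EuclideanSpace ℝ (Fin d)))]
          (fun v => (1 + ‖x‖ ^ p)
            * (φ v * (‖v‖ ^ (α/2) * (h (x - τ • v) + h (x - σ • v))))) := by
        refine Filter.Eventually.of_forall fun v => mul_nonneg (hw0 x) ?_
        have := hh0 (x - τ • v); have := hh0 (x - σ • v)
        have h1 : (0:ℝ) ≤ ‖v‖ ^ (α/2) := Real.rpow_nonneg (norm_nonneg _) _
        positivity
      have e2 : (1 + ‖x‖ ^ p) * Ψ x = ∫ v, (1 + ‖x‖ ^ p)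
          * (φ v * (‖v‖ ^ (α/2) * (h (x - τ • v) + h (x - σ • v)))) := by
        simp only [hΨdef]
        rw [← integral_const_mul]
      rw [e2]
      exact ofReal_integral_eq_lintegral_ofReal hi hnn
    have hswapmeas : AEMeasurable (fun z : (EuclideanSpace ℝ (Fin d)) × (EuclideanSpace ℝ (Fin d))
        => ENNReal.ofReal ((1 + ‖z.1‖ ^ p)
          * (φ z.2 * (‖z.2‖ ^ (α/2) * (h (z.1 - τ • z.2) + h (z.1 - σ • z.2))))))
        ((volume : Measure (EuclideanSpace ℝ (Fin d))).prod volume) :=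
      (((hwcont.measurable.comp measurable_fst).mul hFmeas).ennreal_ofReal).aemeasurable
    calc (∫⁻ x, ENNReal.ofReal ((1 + ‖x‖ ^ p) * Ψ x))
        = ∫⁻ x, ∫⁻ v, ENNReal.ofReal ((1 + ‖x‖ ^ p)
            * (φ v * (‖v‖ ^ (α/2) * (h (x - τ • v) + h (x - σ • v))))) :=
          lintegral_congr e1
    _ = ∫⁻ v, ∫⁻ x, ENNReal.ofReal ((1 + ‖x‖ ^ p)
            * (φ v * (‖v‖ ^ (α/2) * (h (x - τ • v) + h (x - σ • v))))) :=
          lintegral_lintegral_swap hswapmeas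
    _ ≤ ∫⁻ v, ENNReal.ofReal ((2:ℝ) ^ (p+1) * K₀ * m v) := lintegral_mono hInner
    _ = ENNReal.ofReal (∫ v, (2:ℝ) ^ (p+1) * K₀ * m v) :=
        (ofReal_integral_eq_lintegral_ofReal (hmint.const_mul _)
          (Filter.Eventually.of_forall fun v =>
            mul_nonneg (mul_nonneg (Real.rpow_nonneg (by norm_num) _) hK₀0) (hm0 v))).symm
    _ = ENNReal.ofReal ((2:ℝ) ^ (p+1) * K₀ * M) := by
        rw [integral_const_mul]
  have hC20 : 0 ≤ (2:ℝ) ^ (p+1) * K₀ * M :=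
    mul_nonneg (mul_nonneg (Real.rpow_nonneg (by norm_num) _) hK₀0) hM0
  have hwΨint : Integrable (fun x => (1 + ‖x‖ ^ p) * Ψ x) := by
    refine ⟨hwΨmeas, ?_⟩
    rw [hasFiniteIntegral_iff_ofReal hwΨnn]
    exact lt_of_le_of_lt hMain ENNReal.ofReal_lt_top
  have hintΨ : (∫ x, (1 + ‖x‖ ^ p) * Ψ x) ≤ (2:ℝ) ^ (p+1) * K₀ * M := by
    rw [integral_eq_lintegral_of_nonneg_ae hwΨnn hwΨmeas]
    exact ENNReal.toReal_le_of_le_ofReal hC20 hMain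
  have hfin0 : 0 ≤ Real.sqrt L * (t - s) ^ (α/4) :=
    mul_nonneg (Real.sqrt_nonneg _) (Real.rpow_nonneg hts0 _)
  -- final chain
  calc ∫ x, (1 + ‖x‖ ^ p) * |heatSemigroup d t ℓ x - heatSemigroup d s ℓ x|
      ≤ ∫ x, (Real.sqrt L * (t - s) ^ (α/4)) * ((1 + ‖x‖ ^ p) * Ψ x) := by
        refine integral_mono_of_nonneg
          (Filter.Eventually.of_forall fun x => mul_nonneg (hw0 x) (abs_nonneg _))
          (hwΨint.const_mul _) (Filter.Eventually.of_forall fun x => ?_)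
        calc (1 + ‖x‖ ^ p) * |heatSemigroup d t ℓ x - heatSemigroup d s ℓ x|
            ≤ (1 + ‖x‖ ^ p) * ((Real.sqrt L * (t - s) ^ (α/4)) * Ψ x) :=
              mul_le_mul_of_nonneg_left (hDb x) (hw0 x)
        _ = (Real.sqrt L * (t - s) ^ (α/4)) * ((1 + ‖x‖ ^ p) * Ψ x) := by ring
  _ = (Real.sqrt L * (t - s) ^ (α/4)) * ∫ x, (1 + ‖x‖ ^ p) * Ψ x := integral_const_mul _ _
  _ ≤ (Real.sqrt L * (t - s) ^ (α/4)) * ((2:ℝ) ^ (p+1) * K₀ * M) :=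
      mul_le_mul_of_nonneg_left hintΨ hfin0
  _ = (Real.sqrt L * ((2:ℝ) ^ (p+1) * K₀ * M)) * (t - s) ^ (α/4) := by ring
  _ ≤ (Real.sqrt L * ((2:ℝ) ^ (p+1) * K₀ * M) + 1) * (t - s) ^ (α/4) :=
      mul_le_mul_of_nonneg_right (by linarith) (Real.rpow_nonneg hts0 _)
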